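/- Fix an integer n₁ ≥ 1 and K ∈ ℝ. In the polynomial ring ℝ[λ₁,…,λ_{n₁},μ₁,…,μ_{n₁}], set τ := (2/3)Σλᵢ, define P₀ := −(4/3)Σλᵢμᵢ² − (2/3)τΣμᵢ² + (4/9)(Σμᵢ)(Σλᵢμᵢ) + (4/3)τΣλᵢ² + (2/9)τ(Σμᵢ)² + (1/2)τ³ − (2/3)(2n+1)Kτ with n := n₁+1, and inductively P_{k+1} := Σᵢ (∂P_k/∂λᵢ)·((τ/2 + λᵢ)μᵢ) + Σᵢ (∂P_k/∂μᵢ)·(μᵢ² − (τ/2)λᵢ + K). Let S ⊆ ℝ^{2n₁} be the set of points (λ⁰, μ⁰) for which there exist ε > 0 and a real-analytic solution (λᵢ, μᵢ) of the system (ODE) on (−ε, ε) with λᵢ(0) = λᵢ⁰ and μᵢ(0) = μᵢ⁰ for all i. Then S = ⋂_{k≥0} P_k⁻¹(0). -/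

import Mathlib

open MvPolynomial

/-- `τ` as a polynomial in the variables `λ₁,…,λ_{n₁}, μ₁,…,μ_{n₁}`
(the `λ` variables are indexed by `Sum.inl`, the `μ` variables by `Sum.inr`). -/
noncomputable def tauPoly (n₁ : ℕ) : MvPolynomial (Fin n₁ ⊕ Fin n₁) ℝ :=
  C (2/3 : ℝ) * ∑ i : Fin n₁, X (Sum.inl i)

/-- The polynomial `P₀`. -/
noncomputable def P0 (n₁ : ℕ) (K : ℝ) : MvPolynomial (Fin n₁ ⊕ Fin n₁) ℝ :=
  C (-(4/3) : ℝ) * (∑ i : Fin n₁, X (Sum.inl i) * (X (Sum.inr i)) ^ 2)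
  - C (2/3 : ℝ) * tauPoly n₁ * (∑ i : Fin n₁, (X (Sum.inr i)) ^ 2)
  + C (4/9 : ℝ) * (∑ i : Fin n₁, X (Sum.inr i))
      * (∑ i : Fin n₁, X (Sum.inl i) * X (Sum.inr i))
  + C (4/3 : ℝ) * tauPoly n₁ * (∑ i : Fin n₁, (X (Sum.inl i)) ^ 2)
  + C (2/9 : ℝ) * tauPoly n₁ * (∑ i : Fin n₁, X (Sum.inr i)) ^ 2
  + C (1/2 : ℝ) * (tauPoly n₁) ^ 3
  - C ((2/3) * (2 * ((n₁ : ℝ) + 1) + 1) * K) * tauPoly n₁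

/-- The sequence `P_k`, obtained by formally differentiating along the
polynomial vector field given by the right-hand sides of equations (i), (ii). -/
noncomputable def Pseq (n₁ : ℕ) (K : ℝ) : ℕ → MvPolynomial (Fin n₁ ⊕ Fin n₁) ℝ
  | 0 => P0 n₁ K
  | k + 1 =>
      (∑ i : Fin n₁, pderiv (Sum.inl i) (Pseq n₁ K k)
        * ((C (1/2 : ℝ) * tauPoly n₁ + X (Sum.inl i)) * X (Sum.inr i)))
      + ∑ i : Fin n₁, pderiv (Sum.inr i) (Pseq n₁ K k)
        * ((X (Sum.inr i)) ^ 2 - C (1/2 : ℝ) * tauPoly n₁ * X (Sum.inl i) + C K)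

set_option linter.unusedSectionVars false
set_option linter.unusedVariables false
set_option maxHeartbeats 1000000
open Finset Filter FormalMultilinearSeries
open scoped ENNReal NNReal

namespace LieODE




variable {σ : Type*} [Fintype σ] [DecidableEq σ]

noncomputable def lieD (V : σ → MvPolynomial σ ℝ) (Q : MvPolynomial σ ℝ) : MvPolynomial σ ℝ :=
  ∑ i, pderiv i Q * V i

variable (V : σ → MvPolynomial σ ℝ)

theorem lieD_add (Q W : MvPolynomial σ ℝ) : lieD V (Q + W) = lieD V Q + lieD V W := by
  simp [lieD, add_mul, Finset.sum_add_distrib]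

theorem lieD_zero : lieD V 0 = 0 := by simp [lieD]

noncomputable def lieDHom : MvPolynomial σ ℝ →+ MvPolynomial σ ℝ :=
  AddMonoidHom.mk' (lieD V) (lieD_add V)

theorem lieD_nsmul (n : ℕ) (Q : MvPolynomial σ ℝ) : lieD V (n • Q) = n • lieD V Q :=
  map_nsmul (lieDHom V) n Q

theorem lieD_sum {ι : Type*} (s : Finset ι) (f : ι → MvPolynomial σ ℝ) :
    lieD V (∑ i ∈ s, f i) = ∑ i ∈ s, lieD V (f i) :=
  map_sum (lieDHom V) f s

theorem lieD_mul (Q W : MvPolynomial σ ℝ) :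
    lieD V (Q * W) = lieD V Q * W + Q * lieD V W := by
  simp only [lieD, pderiv_mul, add_mul, Finset.sum_add_distrib, Finset.mul_sum]
  rw [Finset.sum_mul]
  congr 1
  · refine Finset.sum_congr rfl fun i _ => by ring
  · refine Finset.sum_congr rfl fun i _ => by ring

theorem lieD_C (a : ℝ) : lieD V (C a) = 0 := by simp [lieD]

theorem lieD_X (i : σ) : lieD V (X i) = V i := by
  simp [lieD, pderiv_X, Pi.single_apply, ite_mul]

theorem lieD_iterate_mul (Q W : MvPolynomial σ ℝ) (n : ℕ) :
    (lieD V)^[n] (Q * W) =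
      ∑ k ∈ range n.succ, (n.choose k • ((lieD V)^[n - k] Q * (lieD V)^[k] W)) := by
  induction n with
  | zero => simp [Finset.range]
  | succ n IH =>
    calc
      (lieD V)^[n + 1] (Q * W) =
          lieD V (∑ k ∈ range n.succ,
              n.choose k • ((lieD V)^[n - k] Q * (lieD V)^[k] W)) := by
        rw [Function.iterate_succ_apply', IH]
      _ = (∑ k ∈ range n.succ,
            n.choose k • ((lieD V)^[n - k + 1] Q * (lieD V)^[k] W)) +
          ∑ k ∈ range n.succ,
            n.choose k • ((lieD V)^[n - k] Q * (lieD V)^[k + 1] W) := by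
        rw [lieD_sum]
        simp_rw [lieD_nsmul, lieD_mul, Function.iterate_succ_apply',
          smul_add, sum_add_distrib]
      _ = (∑ k ∈ range n.succ,
                n.choose k.succ • ((lieD V)^[n - k] Q * (lieD V)^[k + 1] W)) +
              1 • ((lieD V)^[n + 1] Q * (lieD V)^[0] W) +
            ∑ k ∈ range n.succ, n.choose k • ((lieD V)^[n - k] Q * (lieD V)^[k + 1] W) :=
        ?_
      _ = (((∑ k ∈ range n.succ, n.choose k • ((lieD V)^[n - k] Q * (lieD V)^[k + 1] W)) +
              ∑ k ∈ range n.succ,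
                n.choose k.succ • ((lieD V)^[n - k] Q * (lieD V)^[k + 1] W)) +
            1 • ((lieD V)^[n + 1] Q * (lieD V)^[0] W)) := by
        rw [add_comm, add_assoc]
      _ = (∑ i ∈ range n.succ,
              (n + 1).choose (i + 1) • ((lieD V)^[n + 1 - (i + 1)] Q * (lieD V)^[i + 1] W)) +
            1 • ((lieD V)^[n + 1] Q * (lieD V)^[0] W) := by
        simp_rw [Nat.choose_succ_succ, Nat.succ_sub_succ, add_smul, sum_add_distrib]
      _ = ∑ k ∈ range n.succ.succ,
            n.succ.choose k • ((lieD V)^[n.succ - k] Q * (lieD V)^[k] W) := by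
        rw [sum_range_succ' _ n.succ, Nat.choose_zero_right, tsub_zero]
    congr
    refine (sum_range_succ' _ _).trans (congr_arg₂ (· + ·) ?_ ?_)
    · rw [sum_range_succ, Nat.choose_succ_self, zero_smul, add_zero]
      refine sum_congr rfl fun k hk => ?_
      rw [mem_range] at hk
      congr
      omega
    · rw [Nat.choose_zero_right, tsub_zero]




variable {σ : Type*} [Fintype σ] [DecidableEq σ]

def wt (α : σ →₀ ℕ) : ℕ := α.sum fun _ n => n

theorem wt_add (α β : σ →₀ ℕ) : wt (α + β) = wt α + wt β :=
  Finsupp.sum_add_index' (fun _ => rfl) (fun _ _ _ => rfl)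

theorem wt_single (i : σ) : wt (Finsupp.single i 1) = 1 := by
  simp [wt, Finsupp.sum_single_index]

theorem wt_sub_single {α : σ →₀ ℕ} {i : σ} (h : α i ≠ 0) :
    wt α = wt (α - Finsupp.single i 1) + 1 := by
  have hle : Finsupp.single i 1 ≤ α := by
    rw [Finsupp.single_le_iff]; omega
  conv_lhs => rw [← tsub_add_cancel_of_le hle]
  rw [wt_add, wt_single]

theorem wt_sub_single_le (α : σ →₀ ℕ) (i : σ) :
    wt (α - Finsupp.single i 1) ≤ wt α := by
  by_cases h : α i = 0
  · have : α - Finsupp.single i 1 = α := by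
      ext j
      rcases eq_or_ne j i with rfl | hj
      · simp [Finsupp.tsub_apply, h]
      · simp [Finsupp.tsub_apply, Finsupp.single_apply, hj, Ne.symm hj]
    rw [this]
  · rw [wt_sub_single h]; omega

theorem apply_le_wt (α : σ →₀ ℕ) (i : σ) : α i ≤ wt α := by
  by_cases h : α i = 0
  · omega
  · exact Finset.single_le_sum (f := fun j => α j) (fun _ _ => Nat.zero_le _)
      (Finsupp.mem_support_iff.mpr h)

theorem wt_le_totalDegree {Q : MvPolynomial σ ℝ} {α : σ →₀ ℕ} (h : α ∈ Q.support) :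
    wt α ≤ Q.totalDegree := le_totalDegree h

noncomputable def pnorm (R : ℝ) (Q : MvPolynomial σ ℝ) : ℝ :=
  ∑ α ∈ Q.support, |Q.coeff α| * R ^ wt α

theorem pnorm_nonneg {R : ℝ} (hR : 0 ≤ R) (Q : MvPolynomial σ ℝ) : 0 ≤ pnorm R Q :=
  Finset.sum_nonneg fun α _ => mul_nonneg (abs_nonneg _) (pow_nonneg hR _)

theorem pnorm_eq_sum_superset {R : ℝ} {Q : MvPolynomial σ ℝ} {s : Finset (σ →₀ ℕ)}
    (h : Q.support ⊆ s) : pnorm R Q = ∑ α ∈ s, |Q.coeff α| * R ^ wt α :=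
  Finset.sum_subset h fun α _ hα => by
    simp [MvPolynomial.notMem_support_iff.mp hα]

theorem pnorm_zero (R : ℝ) : pnorm R (0 : MvPolynomial σ ℝ) = 0 := by simp [pnorm]

theorem pnorm_monomial_le (R : ℝ) (α : σ →₀ ℕ) (c : ℝ) :
    pnorm R (monomial α c) ≤ |c| * R ^ wt α := by
  by_cases hc : c = 0
  · simp [hc, pnorm_zero]
  · rw [pnorm, support_monomial, if_neg hc, Finset.sum_singleton, coeff_monomial, if_pos rfl]

theorem pnorm_add_le {R : ℝ} (hR : 0 ≤ R) (Q W : MvPolynomial σ ℝ) :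
    pnorm R (Q + W) ≤ pnorm R Q + pnorm R W := by
  have hs : (Q + W).support ⊆ Q.support ∪ W.support := MvPolynomial.support_add
  rw [pnorm_eq_sum_superset hs, pnorm_eq_sum_superset (Finset.subset_union_left (s₂ := W.support)),
    pnorm_eq_sum_superset (Finset.subset_union_right (s₁ := Q.support)),
    ← Finset.sum_add_distrib]
  refine Finset.sum_le_sum fun α _ => ?_
  rw [coeff_add, ← add_mul]
  exact mul_le_mul_of_nonneg_right (abs_add_le _ _) (pow_nonneg hR _)

theorem pnorm_sum_le {R : ℝ} (hR : 0 ≤ R) {ι : Type*} (s : Finset ι)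
    (f : ι → MvPolynomial σ ℝ) :
    pnorm R (∑ i ∈ s, f i) ≤ ∑ i ∈ s, pnorm R (f i) := by
  classical
  induction s using Finset.induction_on with
  | empty => simp [pnorm_zero]
  | insert _ _ h ih =>
    rw [Finset.sum_insert h, Finset.sum_insert h]
    exact (pnorm_add_le hR _ _).trans (by linarith)

theorem pnorm_mul_le {R : ℝ} (hR : 0 ≤ R) (Q W : MvPolynomial σ ℝ) :
    pnorm R (Q * W) ≤ pnorm R Q * pnorm R W := by
  conv_lhs => rw [Q.as_sum, W.as_sum, Finset.sum_mul_sum]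
  simp_rw [monomial_mul]
  refine le_trans (pnorm_sum_le hR _ _) ?_
  refine le_trans (Finset.sum_le_sum fun α _ => pnorm_sum_le hR _ _) ?_
  rw [pnorm, pnorm, Finset.sum_mul_sum]
  refine Finset.sum_le_sum fun α _ => Finset.sum_le_sum fun β _ => ?_
  refine le_trans (pnorm_monomial_le _ _ _) ?_
  rw [abs_mul, wt_add, pow_add]
  exact le_of_eq (by ring)

theorem abs_eval_le {R : ℝ} (hR : 0 ≤ R) {p : σ → ℝ} (hp : ∀ i, |p i| ≤ R)
    (Q : MvPolynomial σ ℝ) : |eval p Q| ≤ pnorm R Q := by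
  rw [eval_eq]
  refine le_trans (Finset.abs_sum_le_sum_abs _ _) (Finset.sum_le_sum fun α hα => ?_)
  rw [abs_mul]
  refine mul_le_mul_of_nonneg_left ?_ (abs_nonneg _)
  rw [abs_prod]
  have h1 : ∀ i ∈ α.support, |p i ^ α i| ≤ R ^ α i := fun i _ => by
    rw [abs_pow]; exact pow_le_pow_left₀ (abs_nonneg _) (hp i) _
  refine le_trans (Finset.prod_le_prod (fun i _ => abs_nonneg _) h1) ?_
  rw [Finset.prod_pow_eq_pow_sum]
  rfl

theorem pnorm_pderiv_le {R : ℝ} (hR : 1 ≤ R) (i : σ) (Q : MvPolynomial σ ℝ) :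
    pnorm R (pderiv i Q) ≤ (Q.totalDegree : ℝ) * pnorm R Q := by
  have h0 : (0:ℝ) ≤ R := le_trans zero_le_one hR
  conv_lhs => rw [show pderiv i Q = ∑ α ∈ Q.support, pderiv i (monomial α (coeff α Q)) by
    rw [← map_sum, ← Q.as_sum]]
  refine le_trans (pnorm_sum_le h0 _ _) ?_
  rw [show (Q.totalDegree:ℝ) * pnorm R Q
      = ∑ α ∈ Q.support, (Q.totalDegree:ℝ) * (|coeff α Q| * R ^ wt α) by
    rw [pnorm, Finset.mul_sum]]
  refine Finset.sum_le_sum fun α hα => ?_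
  rw [pderiv_monomial]
  refine le_trans (pnorm_monomial_le _ _ _) ?_
  by_cases hz : α i = 0
  · simp [hz]
    positivity
  · have h1 : |coeff α Q * (α i : ℝ)| = |coeff α Q| * (α i : ℝ) := by
      rw [abs_mul, Nat.abs_cast]
    rw [h1]
    have h2 : R ^ wt (α - Finsupp.single i 1) ≤ R ^ wt α :=
      pow_le_pow_right₀ hR (wt_sub_single_le α i)
    have h3 : (α i : ℝ) ≤ (Q.totalDegree : ℝ) := by
      exact_mod_cast le_trans (apply_le_wt α i) (wt_le_totalDegree hα)
    calc |coeff α Q| * (α i:ℝ) * R ^ wt (α - Finsupp.single i 1)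
        ≤ |coeff α Q| * (Q.totalDegree:ℝ) * R ^ wt α := by
          apply mul_le_mul (mul_le_mul_of_nonneg_left h3 (abs_nonneg _)) h2 (by positivity)
          positivity
      _ = (Q.totalDegree:ℝ) * (|coeff α Q| * R ^ wt α) := by ring

theorem totalDegree_pderiv_le (i : σ) (Q : MvPolynomial σ ℝ) :
    (pderiv i Q).totalDegree ≤ Q.totalDegree := by
  conv_lhs => rw [show pderiv i Q = ∑ α ∈ Q.support, pderiv i (monomial α (coeff α Q)) by
    rw [← map_sum, ← Q.as_sum]]
  refine le_trans (totalDegree_finset_sum _ _) (Finset.sup_le fun α hα => ?_)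
  rw [pderiv_monomial]
  refine le_trans (totalDegree_monomial_le _ _) ?_
  exact le_trans (wt_sub_single_le α i) (wt_le_totalDegree hα)




theorem geom_summable {a : ℕ → ℝ} {A C : ℝ} (hC : 1 ≤ C)
    (hb : ∀ k, |a k| ≤ A * C ^ k) {t : ℝ} (ht : |t| < (2 * C)⁻¹) :
    Summable fun k => |a k * t ^ k| := by
  have hC0 : (0:ℝ) < C := lt_of_lt_of_le one_pos hC
  have hA : 0 ≤ A := by
    have := (abs_nonneg (a 0)).trans (hb 0)
    simpa using this
  refine Summable.of_nonneg_of_le (fun k => abs_nonneg _) (fun k => ?_)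
    ((summable_geometric_two).mul_left A)
  have h1 : |a k * t ^ k| = |a k| * |t| ^ k := by
    rw [abs_mul, abs_pow]
  rw [h1]
  have h2 : |a k| * |t| ^ k ≤ A * C ^ k * |t| ^ k :=
    mul_le_mul_of_nonneg_right (hb k) (pow_nonneg (abs_nonneg _) _)
  refine h2.trans ?_
  have h3 : C ^ k * |t| ^ k = (C * |t|) ^ k := (mul_pow _ _ _).symm
  rw [mul_assoc, h3]
  have h4 : C * |t| ≤ 1 / 2 := by
    have := mul_le_mul_of_nonneg_left ht.le hC0.le
    calc C * |t| ≤ C * (2 * C)⁻¹ := this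
      _ = 1 / 2 := by field_simp
  have h5 : (C * |t|) ^ k ≤ (1 / 2) ^ k :=
    pow_le_pow_left₀ (mul_nonneg hC0.le (abs_nonneg _)) h4 _
  have : A * (C * |t|) ^ k ≤ A * (1/2) ^ k := mul_le_mul_of_nonneg_left h5 hA
  simpa [one_div] using this

theorem geom_summable' {a : ℕ → ℝ} {A C : ℝ} (hC : 1 ≤ C)
    (hb : ∀ k, |a k| ≤ A * C ^ k) {t : ℝ} (ht : |t| < (2 * C)⁻¹) :
    Summable fun k => a k * t ^ k :=
  (geom_summable hC hb ht).of_abs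

/-- summability of the term-wise derivative series -/
theorem geom_summable_deriv {a : ℕ → ℝ} {A C : ℝ} (hC : 1 ≤ C)
    (hb : ∀ k, |a k| ≤ A * C ^ k) {t : ℝ} (ht : |t| < (2 * C)⁻¹) :
    Summable fun k => a k * ((k : ℝ) * t ^ (k - 1)) := by
  have hC0 : (0:ℝ) < C := lt_of_lt_of_le one_pos hC
  have hA : 0 ≤ A := by
    have := (abs_nonneg (a 0)).trans (hb 0)
    simpa using this
  refine Summable.of_norm_bounded
    (((summable_pow_mul_geometric_of_norm_lt_one 1
      (r := (1:ℝ)/2) (by norm_num)).mul_left (A * C * 2))) (fun k => ?_)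
  have h4 : C * |t| ≤ 1 / 2 := by
    have := mul_le_mul_of_nonneg_left ht.le hC0.le
    calc C * |t| ≤ C * (2 * C)⁻¹ := this
      _ = 1 / 2 := by field_simp
  rcases Nat.eq_zero_or_pos k with rfl | hk
  · simp
  · have hk1 : k - 1 + 1 = k := Nat.succ_pred_eq_of_pos hk
    have : ‖a k * ((k : ℝ) * t ^ (k - 1))‖ = |a k| * (k : ℝ) * |t| ^ (k-1) := by
      rw [norm_mul, norm_mul, Real.norm_natCast, norm_pow, Real.norm_eq_abs,
        Real.norm_eq_abs, ← mul_assoc]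
    rw [this]
    have h5 : |a k| * (k:ℝ) * |t| ^ (k-1) ≤ A * C^k * ((k:ℝ) * |t|^(k-1)) := by
      have := mul_le_mul_of_nonneg_right (hb k)
        (mul_nonneg (Nat.cast_nonneg k) (pow_nonneg (abs_nonneg t) (k-1)))
      calc |a k| * (k:ℝ) * |t| ^ (k-1) = |a k| * ((k:ℝ) * |t|^(k-1)) := by ring
        _ ≤ A * C^k * ((k:ℝ) * |t|^(k-1)) := this
    refine h5.trans ?_
    have hCk : C ^ k = C * C ^ (k-1) := by
      conv_lhs => rw [← hk1]
      rw [pow_succ]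
      ring
    have h6 : A * C^k * ((k:ℝ) * |t|^(k-1)) = (A * C) * (k:ℝ) * (C*|t|)^(k-1) := by
      rw [hCk, mul_pow]; ring
    rw [h6]
    have h7 : (C*|t|)^(k-1) ≤ ((1:ℝ)/2)^(k-1) :=
      pow_le_pow_left₀ (mul_nonneg hC0.le (abs_nonneg _)) h4 _
    have h8 : (A*C) * (k:ℝ) * (C*|t|)^(k-1) ≤ (A*C) * (k:ℝ) * ((1:ℝ)/2)^(k-1) := by
      apply mul_le_mul_of_nonneg_left h7
      positivity
    refine h8.trans ?_
    have h9 : ((1:ℝ)/2)^(k-1) = 2 * (1/2)^k := by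
      conv_rhs => rw [← hk1]
      rw [pow_succ]
      ring
    calc (A*C) * (k:ℝ) * ((1:ℝ)/2)^(k-1) = A * C * 2 * ((k:ℝ)^1 * (1/2)^k) := by
          rw [h9]; ring
      _ ≤ A * C * 2 * ((k:ℝ)^1 * (1/2)^k) := le_refl _

/-- Term-wise differentiation: the sum of a geometrically-bounded power series has
derivative given by the shifted series. -/
theorem geom_hasDerivAt {a : ℕ → ℝ} {A C : ℝ} (hC : 1 ≤ C)
    (hb : ∀ k, |a k| ≤ A * C ^ k) {t : ℝ} (ht : |t| < (2 * C)⁻¹) :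
    HasDerivAt (fun y => ∑' k, a k * y ^ k)
      (∑' k : ℕ, ((k:ℝ) + 1) * a (k + 1) * t ^ k) t := by
  have hC0 : (0:ℝ) < C := lt_of_lt_of_le one_pos hC
  have hA : 0 ≤ A := by
    have := (abs_nonneg (a 0)).trans (hb 0)
    simpa using this
  have hr0 : (0:ℝ) < (2*C)⁻¹ := by positivity
  -- the sup bound over the ball
  set u : ℕ → ℝ := fun k => A * C * 2 * ((k:ℝ)^1 * (1/2)^k) with hu
  have husum : Summable u :=
    (summable_pow_mul_geometric_of_norm_lt_one 1 (r := (1:ℝ)/2) (by norm_num)).mul_left _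
  have key : HasDerivAt (fun y => ∑' k, a k * y ^ k)
      (∑' k, a k * ((k:ℝ) * t ^ (k - 1))) t := by
    refine hasDerivAt_tsum_of_isPreconnected husum (Metric.isOpen_ball)
      (Convex.isPreconnected (convex_ball (0:ℝ) (2*C)⁻¹))
      (g := fun k y => a k * y ^ k) (g' := fun k y => a k * ((k:ℝ) * y ^ (k-1)))
      (fun k y _ => (hasDerivAt_pow k y).const_mul (a k))
      (fun k y hy => ?_) (Metric.mem_ball_self hr0) ?_ (by simpa [Real.dist_eq] using ht)
    · -- norm bound
      rw [Real.norm_eq_abs]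
      have hyb : |y| < (2*C)⁻¹ := by simpa [Real.dist_eq] using hy
      have h4 : C * |y| ≤ 1 / 2 := by
        have := mul_le_mul_of_nonneg_left hyb.le hC0.le
        calc C * |y| ≤ C * (2 * C)⁻¹ := this
          _ = 1 / 2 := by field_simp
      rcases Nat.eq_zero_or_pos k with rfl | hk
      · simp [hu]
      · have hk1 : k - 1 + 1 = k := Nat.succ_pred_eq_of_pos hk
        have e1 : |a k * ((k:ℝ) * y ^ (k-1))| = |a k| * (k:ℝ) * |y|^(k-1) := by
          rw [abs_mul, abs_mul, Nat.abs_cast, abs_pow, ← mul_assoc]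
        rw [e1]
        have h5 : |a k| * (k:ℝ) * |y| ^ (k-1) ≤ A * C^k * ((k:ℝ) * |y|^(k-1)) := by
          have := mul_le_mul_of_nonneg_right (hb k)
            (mul_nonneg (Nat.cast_nonneg k) (pow_nonneg (abs_nonneg y) (k-1)))
          calc |a k| * (k:ℝ) * |y| ^ (k-1) = |a k| * ((k:ℝ) * |y|^(k-1)) := by ring
            _ ≤ A * C^k * ((k:ℝ) * |y|^(k-1)) := this
        refine h5.trans ?_
        have hCk : C ^ k = C * C ^ (k-1) := by
          conv_lhs => rw [← hk1]; rw [pow_succ]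
          ring
        have h6 : A * C^k * ((k:ℝ) * |y|^(k-1)) = (A * C) * (k:ℝ) * (C*|y|)^(k-1) := by
          rw [hCk, mul_pow]; ring
        rw [h6]
        have h7 : (C*|y|)^(k-1) ≤ ((1:ℝ)/2)^(k-1) :=
          pow_le_pow_left₀ (mul_nonneg hC0.le (abs_nonneg _)) h4 _
        have h8 : (A*C) * (k:ℝ) * (C*|y|)^(k-1) ≤ (A*C) * (k:ℝ) * ((1:ℝ)/2)^(k-1) := by
          apply mul_le_mul_of_nonneg_left h7
          positivity
        refine h8.trans ?_
        have h9 : ((1:ℝ)/2)^(k-1) = 2 * (1/2)^k := by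
          conv_rhs => rw [← hk1]; rw [pow_succ]
          ring
        rw [hu]
        simp only [pow_one]
        rw [h9]
        exact le_of_eq (by ring)
    · -- summability at 0
      refine Summable.of_norm_bounded_eventually_nat (g := fun k => 0) ?_ ?_
      · exact summable_zero
      · filter_upwards [eventually_gt_atTop 0] with k hk
        simp [Nat.pos_iff_ne_zero.mp hk]
  -- now rewrite the derivative value
  have hsum : Summable fun k => a k * ((k:ℝ) * t ^ (k - 1)) :=
    geom_summable_deriv hC hb ht
  have this1 := (Summable.tsum_eq_zero_add hsum)
  simp only [Nat.cast_zero, zero_mul, mul_zero, zero_add] at this1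
  rw [show (∑' k : ℕ, a k * ((k:ℝ) * t ^ (k - 1)))
      = ∑' k : ℕ, ((k:ℝ) + 1) * a (k + 1) * t ^ k from by
    rw [this1]
    refine tsum_congr fun k => ?_
    rw [Nat.add_sub_cancel]
    push_cast
    ring] at key
  exact key





theorem geom_analyticOnNhd {a : ℕ → ℝ} {A C : ℝ} (hC : 1 ≤ C)
    (hb : ∀ k, |a k| ≤ A * C ^ k) :
    AnalyticOnNhd ℝ (fun y : ℝ => ∑' k, a k * y ^ k) (Metric.ball (0:ℝ) (2*C)⁻¹) := by
  have hC0 : (0:ℝ) < C := lt_of_lt_of_le one_pos hC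
  have hA : 0 ≤ A := by
    have := (abs_nonneg (a 0)).trans (hb 0)
    simpa using this
  have hr0 : (0:ℝ) < (2*C)⁻¹ := by positivity
  set P : FormalMultilinearSeries ℝ ℝ ℝ := FormalMultilinearSeries.ofScalars ℝ a with hP
  have hrad : (((2*C)⁻¹).toNNReal : ℝ≥0∞) ≤ P.radius := by
    refine P.le_radius_of_bound A (fun n => ?_)
    have h1 : ‖P n‖ = |a n| := by
      rw [hP]
      simpa using FormalMultilinearSeries.ofScalars_norm (𝕜 := ℝ) ℝ a n
    rw [h1]
    have h2 : ((((2*C)⁻¹).toNNReal : ℝ≥0) : ℝ) = (2*C)⁻¹ := by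
      rw [Real.coe_toNNReal _ hr0.le]
    rw [h2]
    have h3 : |a n| * ((2*C)⁻¹) ^ n ≤ (A * C ^ n) * ((2*C)⁻¹) ^ n :=
      mul_le_mul_of_nonneg_right (hb n) (by positivity)
    refine h3.trans ?_
    have h4 : A * C ^ n * ((2*C)⁻¹) ^ n = A * (1/2) ^ n := by
      rw [mul_assoc, ← mul_pow]
      congr 2
      field_simp
    rw [h4]
    calc A * (1/2:ℝ)^n ≤ A * 1 := by
          refine mul_le_mul_of_nonneg_left ?_ hA
          refine pow_le_one₀ (by norm_num) (by norm_num)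
      _ = A := mul_one A
  have hpos : 0 < P.radius := lt_of_lt_of_le (by
    simpa using (Real.toNNReal_pos.mpr hr0)) hrad
  have hball := P.hasFPowerSeriesOnBall hpos
  have hsum_eq : (fun y : ℝ => ∑' k, a k * y ^ k) = P.sum := by
    funext y
    rw [FormalMultilinearSeries.sum]
    refine tsum_congr fun n => ?_
    rw [hP, FormalMultilinearSeries.ofScalars_apply_eq, smul_eq_mul]
  rw [hsum_eq]
  intro t ht
  refine hball.analyticAt_of_mem ?_
  rw [EMetric.mem_ball]
  refine lt_of_lt_of_le ?_ hrad
  rw [edist_dist, Real.dist_eq, sub_zero]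
  have ht' : |t| < (2*C)⁻¹ := by simpa [Real.dist_eq] using ht
  rw [ENNReal.ofReal_lt_iff_lt_toReal (abs_nonneg t) (by simp)]
  have : (((2*C)⁻¹).toNNReal : ℝ≥0∞).toReal = (2*C)⁻¹ := by
    rw [ENNReal.coe_toReal, Real.coe_toNNReal _ hr0.le]
  rw [this]
  exact ht'


section ChunkE

variable {σ : Type*} [Fintype σ] [DecidableEq σ]
variable (V : σ → MvPolynomial σ ℝ) (p : σ → ℝ)

noncomputable def acoef (Q : MvPolynomial σ ℝ) (k : ℕ) : ℝ :=
  eval p ((lieD V)^[k] Q) / k.factorial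

noncomputable def gfun (Q : MvPolynomial σ ℝ) : ℝ → ℝ :=
  fun t => ∑' k, acoef V p Q k * t ^ k

theorem iter_zero (k : ℕ) : (lieD V)^[k] 0 = 0 :=
  Function.iterate_fixed (lieD_zero V) k

theorem iter_add (k : ℕ) (Q W : MvPolynomial σ ℝ) :
    (lieD V)^[k] (Q + W) = (lieD V)^[k] Q + (lieD V)^[k] W := by
  induction k generalizing Q W with
  | zero => rfl
  | succ k ih =>
    rw [Function.iterate_succ_apply, Function.iterate_succ_apply,
      Function.iterate_succ_apply, lieD_add, ih]

theorem acoef_add (Q W : MvPolynomial σ ℝ) (k : ℕ) :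
    acoef V p (Q + W) k = acoef V p Q k + acoef V p W k := by
  rw [acoef, acoef, acoef, iter_add, map_add, add_div]

theorem acoef_C (c : ℝ) (k : ℕ) :
    acoef V p (C c) k = if k = 0 then c else 0 := by
  cases k with
  | zero => simp [acoef]
  | succ k =>
    simp only [acoef, Function.iterate_succ_apply, lieD_C, iter_zero]
    simp

theorem acoef_X_zero (i : σ) : acoef V p (X i) 0 = p i := by simp [acoef]

theorem gfun_C (c : ℝ) (t : ℝ) : gfun V p (C c) t = c := by
  rw [gfun]
  rw [tsum_eq_single 0 (fun k hk => by simp [acoef_C, hk])]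
  simp [acoef_C]

theorem gfun_zero (Q : MvPolynomial σ ℝ) : gfun V p Q 0 = eval p Q := by
  rw [gfun]
  rw [tsum_eq_single 0 (fun k hk => by simp [zero_pow hk])]
  simp [acoef]

theorem acoef_shift (Q : MvPolynomial σ ℝ) (k : ℕ) :
    acoef V p (lieD V Q) k = ((k : ℝ) + 1) * acoef V p Q (k + 1) := by
  rw [acoef, acoef, ← Function.iterate_succ_apply, Nat.factorial_succ]
  have h1 : (k.factorial : ℝ) ≠ 0 := Nat.cast_ne_zero.mpr (Nat.factorial_ne_zero k)
  have h2 : ((k:ℝ) + 1) ≠ 0 := by positivity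
  field_simp
  push_cast
  ring

theorem totalDegree_lieD_le {Dd : ℕ} (hVD : ∀ i, (V i).totalDegree ≤ Dd)
    (Q : MvPolynomial σ ℝ) :
    (lieD V Q).totalDegree ≤ Q.totalDegree + Dd := by
  refine le_trans (totalDegree_finset_sum _ _) (Finset.sup_le fun i _ => ?_)
  refine le_trans (totalDegree_mul _ _) ?_
  exact add_le_add (totalDegree_pderiv_le i Q) (hVD i)

theorem pnorm_lieD_le {R M : ℝ} (hR : 1 ≤ R) (hM : ∑ i, pnorm R (V i) ≤ M)
    (Q : MvPolynomial σ ℝ) :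
    pnorm R (lieD V Q) ≤ (Q.totalDegree : ℝ) * M * pnorm R Q := by
  have h0 : (0:ℝ) ≤ R := le_trans zero_le_one hR
  refine le_trans (pnorm_sum_le h0 _ _) ?_
  have step : ∀ i : σ, pnorm R (pderiv i Q * V i)
      ≤ ((Q.totalDegree:ℝ) * pnorm R Q) * pnorm R (V i) := fun i =>
    (pnorm_mul_le h0 _ _).trans
      (mul_le_mul_of_nonneg_right (pnorm_pderiv_le hR i Q) (pnorm_nonneg h0 _))
  refine le_trans (Finset.sum_le_sum fun i _ => step i) ?_
  rw [← Finset.mul_sum]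
  have hnn : (0:ℝ) ≤ (Q.totalDegree:ℝ) * pnorm R Q := by
    have := pnorm_nonneg h0 Q
    positivity
  calc ((Q.totalDegree:ℝ) * pnorm R Q) * (∑ i, pnorm R (V i))
      ≤ ((Q.totalDegree:ℝ) * pnorm R Q) * M := mul_le_mul_of_nonneg_left hM hnn
    _ = (Q.totalDegree : ℝ) * M * pnorm R Q := by ring

theorem master {R M : ℝ} (hR : 1 ≤ R) (hM : ∑ i, pnorm R (V i) ≤ M)
    {Q : MvPolynomial σ ℝ} {Dd : ℕ} (hQD : Q.totalDegree ≤ Dd)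
    (hVD : ∀ i, (V i).totalDegree ≤ Dd) (k : ℕ) :
    ((lieD V)^[k] Q).totalDegree ≤ (k+1) * Dd ∧
      pnorm R ((lieD V)^[k] Q) ≤ pnorm R Q * k.factorial * ((Dd:ℝ) * M) ^ k := by
  have h0 : (0:ℝ) ≤ R := le_trans zero_le_one hR
  have hM0 : 0 ≤ M :=
    le_trans (Finset.sum_nonneg fun i _ => pnorm_nonneg h0 _) hM
  induction k with
  | zero => exact ⟨by simpa using hQD, by simp⟩
  | succ k ih =>
    obtain ⟨h1, h2⟩ := ih
    set W := (lieD V)^[k] Q with hW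
    constructor
    · rw [Function.iterate_succ_apply', ← hW]
      refine le_trans (totalDegree_lieD_le V hVD W) ?_
      have : W.totalDegree + Dd ≤ (k+1) * Dd + Dd := Nat.add_le_add_right h1 Dd
      refine this.trans (le_of_eq ?_)
      ring
    · rw [Function.iterate_succ_apply', ← hW]
      have hW1 : (W.totalDegree : ℝ) ≤ ((k:ℝ)+1) * Dd := by exact_mod_cast h1
      have e1 := pnorm_lieD_le V hR hM W
      have e2 : (W.totalDegree:ℝ) * M * pnorm R W
          ≤ (((k:ℝ)+1) * Dd) * M * pnorm R W :=
        mul_le_mul_of_nonneg_right (mul_le_mul_of_nonneg_right hW1 hM0)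
          (pnorm_nonneg h0 _)
      have e3 : (((k:ℝ)+1) * Dd) * M * pnorm R W
          ≤ (((k:ℝ)+1) * Dd) * M * (pnorm R Q * k.factorial * ((Dd:ℝ) * M) ^ k) := by
        refine mul_le_mul_of_nonneg_left h2 ?_
        positivity
      refine e1.trans (e2.trans (e3.trans (le_of_eq ?_)))
      rw [Nat.factorial_succ]
      push_cast
      ring

theorem abs_acoef_le {R M : ℝ} (hR : 1 ≤ R) (hp : ∀ i, |p i| ≤ R)
    (hM : ∑ i, pnorm R (V i) ≤ M) {Q : MvPolynomial σ ℝ} {Dd : ℕ}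
    (hQD : Q.totalDegree ≤ Dd) (hVD : ∀ i, (V i).totalDegree ≤ Dd) (k : ℕ) :
    |acoef V p Q k| ≤ pnorm R Q * ((Dd:ℝ) * M) ^ k := by
  have h0 : (0:ℝ) ≤ R := le_trans zero_le_one hR
  have hfac : (0:ℝ) < k.factorial := by exact_mod_cast k.factorial_pos
  rw [acoef, abs_div, abs_of_pos hfac, div_le_iff₀ hfac]
  refine le_trans (abs_eval_le h0 hp _) ?_
  refine le_trans (master V hR hM hQD hVD k).2 (le_of_eq ?_)
  ring

theorem exists_geom_bound {R M : ℝ} (hR : 1 ≤ R) (hp : ∀ i, |p i| ≤ R)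
    (hM : ∑ i, pnorm R (V i) ≤ M) (Q : MvPolynomial σ ℝ) :
    ∃ C : ℝ, 1 ≤ C ∧ ∀ k, |acoef V p Q k| ≤ (pnorm R Q + 1) * C ^ k := by
  have h0 : (0:ℝ) ≤ R := le_trans zero_le_one hR
  have hM0 : 0 ≤ M :=
    le_trans (Finset.sum_nonneg fun i _ => pnorm_nonneg h0 _) hM
  set Dd : ℕ := max Q.totalDegree (Finset.univ.sup fun i => (V i).totalDegree) with hDd
  refine ⟨(Dd:ℝ) * M + 1, le_add_of_nonneg_left (by positivity), fun k => ?_⟩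
  have hQD : Q.totalDegree ≤ Dd := le_max_left _ _
  have hVD : ∀ i, (V i).totalDegree ≤ Dd := fun i =>
    le_trans (Finset.le_sup (f := fun i => (V i).totalDegree) (Finset.mem_univ i)) (le_max_right _ _)
  refine le_trans (abs_acoef_le V p hR hp hM hQD hVD k) ?_
  have hbase : ((Dd:ℝ) * M) ^ k ≤ ((Dd:ℝ) * M + 1) ^ k :=
    pow_le_pow_left₀ (by positivity) (by linarith) k
  have hpn : 0 ≤ pnorm R Q := pnorm_nonneg h0 Q
  have := mul_le_mul_of_nonneg_left hbase hpn
  refine this.trans ?_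
  have : (0:ℝ) ≤ ((Dd:ℝ) * M + 1) ^ k := by positivity
  nlinarith

end ChunkE

section ChunkF

variable {σ : Type*} [Fintype σ] [DecidableEq σ]
variable (V : σ → MvPolynomial σ ℝ) (p : σ → ℝ)

theorem acoef_mul (Q W : MvPolynomial σ ℝ) (n : ℕ) :
    acoef V p (Q * W) n
      = ∑ k ∈ range (n+1), acoef V p Q (n - k) * acoef V p W k := by
  rw [acoef, lieD_iterate_mul, map_sum, Finset.sum_div]
  refine Finset.sum_congr rfl fun k hk => ?_
  rw [Finset.mem_range] at hk
  have hk' : k ≤ n := by omega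
  rw [map_nsmul, nsmul_eq_mul, map_mul, acoef, acoef]
  have hfacn : ((n.factorial : ℝ)) = (n.choose k : ℝ) * k.factorial * (n-k).factorial := by
    exact_mod_cast (Nat.choose_mul_factorial_mul_factorial hk').symm
  have h1 : ((n-k).factorial : ℝ) ≠ 0 := Nat.cast_ne_zero.mpr (Nat.factorial_ne_zero _)
  have h2 : ((k).factorial : ℝ) ≠ 0 := Nat.cast_ne_zero.mpr (Nat.factorial_ne_zero _)
  have h3 : ((n).factorial : ℝ) ≠ 0 := Nat.cast_ne_zero.mpr (Nat.factorial_ne_zero _)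
  rw [hfacn]
  have hc : (0:ℝ) < (n.choose k : ℝ) := by
    exact_mod_cast Nat.choose_pos hk'
  field_simp

theorem summable_abs_gfun {R M : ℝ} (hR : 1 ≤ R) (hp : ∀ i, |p i| ≤ R)
    (hM : ∑ i, pnorm R (V i) ≤ M) (Q : MvPolynomial σ ℝ) :
    ∃ r > 0, ∀ t : ℝ, |t| < r → Summable fun k => |acoef V p Q k * t ^ k| := by
  obtain ⟨C, hC, hb⟩ := exists_geom_bound V p hR hp hM Q
  exact ⟨(2*C)⁻¹, by positivity, fun t ht => geom_summable hC hb ht⟩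

theorem gfun_add {Q W : MvPolynomial σ ℝ} {t : ℝ}
    (hQ : Summable fun k => |acoef V p Q k * t ^ k|)
    (hW : Summable fun k => |acoef V p W k * t ^ k|) :
    gfun V p (Q + W) t = gfun V p Q t + gfun V p W t := by
  rw [gfun, gfun, gfun, ← Summable.tsum_add hQ.of_abs hW.of_abs]
  refine tsum_congr fun k => ?_
  rw [acoef_add]
  ring

theorem gfun_mul {Q W : MvPolynomial σ ℝ} {t : ℝ}
    (hQ : Summable fun k => |acoef V p Q k * t ^ k|)
    (hW : Summable fun k => |acoef V p W k * t ^ k|) :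
    gfun V p (Q * W) t = gfun V p Q t * gfun V p W t := by
  have hQ' : Summable fun k => ‖acoef V p Q k * t ^ k‖ := by
    simpa only [Real.norm_eq_abs] using hQ
  have hW' : Summable fun k => ‖acoef V p W k * t ^ k‖ := by
    simpa only [Real.norm_eq_abs] using hW
  rw [gfun, gfun, gfun,
    tsum_mul_tsum_eq_tsum_sum_antidiagonal_of_summable_norm hQ' hW']
  refine tsum_congr fun n => ?_
  rw [Finset.Nat.sum_antidiagonal_eq_sum_range_succ
    (f := fun k l => (acoef V p Q k * t ^ k) * (acoef V p W l * t ^ l))]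
  rw [acoef_mul, Finset.sum_mul]
  rw [← Finset.sum_range_reflect]
  refine Finset.sum_congr rfl fun k hk => ?_
  rw [Finset.mem_range] at hk
  have h0 : n + 1 - 1 - k = n - k := by omega
  have h1 : n - (n - k) = k := by omega
  have h2 : n - k + k = n := by omega
  rw [h0, h1]
  rw [show t ^ n = t ^ k * t ^ (n-k) by rw [← pow_add]; congr 1; omega]
  ring

theorem eval_eq_gfun {R M : ℝ} (hR : 1 ≤ R) (hp : ∀ i, |p i| ≤ R)
    (hM : ∑ i, pnorm R (V i) ≤ M) (Q : MvPolynomial σ ℝ) :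
    ∃ r > 0, ∀ t : ℝ, |t| < r →
      eval (fun i => gfun V p (X i) t) Q = gfun V p Q t := by
  induction Q using MvPolynomial.induction_on with
  | C a =>
    exact ⟨1, one_pos, fun t _ => by rw [eval_C, gfun_C]⟩
  | add P W ihP ihW =>
    obtain ⟨r1, hr1, h1⟩ := ihP
    obtain ⟨r2, hr2, h2⟩ := ihW
    obtain ⟨r3, hr3, h3⟩ := summable_abs_gfun V p hR hp hM P
    obtain ⟨r4, hr4, h4⟩ := summable_abs_gfun V p hR hp hM W
    refine ⟨min (min r1 r2) (min r3 r4), by positivity, fun t ht => ?_⟩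
    simp only [lt_min_iff] at ht
    rw [map_add, h1 t ht.1.1, h2 t ht.1.2,
      gfun_add V p (h3 t ht.2.1) (h4 t ht.2.2)]
  | mul_X P i ih =>
    obtain ⟨r1, hr1, h1⟩ := ih
    obtain ⟨r3, hr3, h3⟩ := summable_abs_gfun V p hR hp hM P
    obtain ⟨r4, hr4, h4⟩ := summable_abs_gfun V p hR hp hM (X i)
    refine ⟨min r1 (min r3 r4), by positivity, fun t ht => ?_⟩
    simp only [lt_min_iff] at ht
    rw [map_mul, eval_X, h1 t ht.1,
      gfun_mul V p (h3 t ht.2.1) (h4 t ht.2.2)]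

theorem gfun_hasDerivAt {R M : ℝ} (hR : 1 ≤ R) (hp : ∀ i, |p i| ≤ R)
    (hM : ∑ i, pnorm R (V i) ≤ M) (Q : MvPolynomial σ ℝ) :
    ∃ r > 0, ∀ t : ℝ, |t| < r →
      HasDerivAt (gfun V p Q) (gfun V p (lieD V Q) t) t := by
  obtain ⟨C, hC, hb⟩ := exists_geom_bound V p hR hp hM Q
  refine ⟨(2*C)⁻¹, by positivity, fun t ht => ?_⟩
  have key := geom_hasDerivAt hC hb ht
  have : gfun V p (lieD V Q) t = ∑' k : ℕ, ((k:ℝ)+1) * acoef V p Q (k+1) * t ^ k := by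
    rw [gfun]
    exact tsum_congr fun k => by rw [acoef_shift]
  rw [this]
  exact key

theorem gfun_analytic {R M : ℝ} (hR : 1 ≤ R) (hp : ∀ i, |p i| ≤ R)
    (hM : ∑ i, pnorm R (V i) ≤ M) (Q : MvPolynomial σ ℝ) :
    ∃ r > 0, AnalyticOnNhd ℝ (gfun V p Q) (Metric.ball (0:ℝ) r) := by
  obtain ⟨C, hC, hb⟩ := exists_geom_bound V p hR hp hM Q
  exact ⟨(2*C)⁻¹, by positivity, geom_analyticOnNhd hC hb⟩

end ChunkF

section ChunkG

variable {σ : Type*} [Fintype σ] [DecidableEq σ] [Nonempty σ]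

theorem hasDerivAt_eval {c : σ → ℝ → ℝ} {c' : σ → ℝ} {t : ℝ}
    (h : ∀ i, HasDerivAt (fun s => c i s) (c' i) t) (Q : MvPolynomial σ ℝ) :
    HasDerivAt (fun s => eval (fun i => c i s) Q)
      (∑ i, eval (fun i => c i t) (pderiv i Q) * c' i) t := by
  induction Q using MvPolynomial.induction_on with
  | C a =>
    simp only [eval_C, pderiv_C, map_zero, zero_mul, Finset.sum_const_zero]
    exact hasDerivAt_const t a
  | add P W ihP ihW =>
    simp only [map_add, add_mul, Finset.sum_add_distrib]
    exact ihP.add ihW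
  | mul_X P i ih =>
    have key := ih.fun_mul (h i)
    simp only [map_mul, eval_X]
    refine key.congr_deriv ?_
    symm
    simp only [pderiv_mul, map_add, map_mul, eval_X, add_mul, Finset.sum_add_distrib]
    refine congrArg₂ (· + ·) ?_ ?_
    · rw [Finset.sum_mul]
      refine Finset.sum_congr rfl fun j _ => ?_
      ring
    · have hterm : ∀ j : σ, eval (fun i => c i t) P * eval (fun i => c i t) (pderiv j (X i)) * c' j
          = if j = i then eval (fun i => c i t) P * c' j else 0 := fun j => by
        rcases eq_or_ne j i with rfl | hj
        · simp [pderiv_X_self]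
        · simp [pderiv_X_of_ne (Ne.symm hj), hj]
      rw [Finset.sum_congr rfl (fun j _ => hterm j),
        Finset.sum_ite_eq' Finset.univ i (fun j => eval (fun i => c i t) P * c' j)]
      simp

/-- Existence of an analytic solution to the polynomial ODE `x' = V (x)`, `x 0 = p`,
together with control of one extra observable `Q₀`. -/
theorem exists_solution (V : σ → MvPolynomial σ ℝ) (p : σ → ℝ) (Q₀ : MvPolynomial σ ℝ) :
    ∃ ε > 0, ∃ x : σ → ℝ → ℝ,
      (∀ i, AnalyticOnNhd ℝ (x i) (Set.Ioo (-ε) ε)) ∧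
      (∀ i, x i 0 = p i) ∧
      (∀ i, ∀ t ∈ Set.Ioo (-ε) ε, HasDerivAt (x i) (eval (fun j => x j t) (V i)) t) ∧
      (∀ t ∈ Set.Ioo (-ε) ε, eval (fun j => x j t) Q₀ = gfun V p Q₀ t) := by
  classical
  set R : ℝ := 1 + ∑ i, |p i| with hRdef
  have hR : 1 ≤ R := le_add_of_nonneg_right (Finset.sum_nonneg fun i _ => abs_nonneg _)
  have hp : ∀ i, |p i| ≤ R := fun i => by
    have h1 : |p i| ≤ ∑ j, |p j| :=
      Finset.single_le_sum (f := fun j => |p j|) (fun j _ => abs_nonneg _) (Finset.mem_univ i)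
    simp only [hRdef]
    linarith
  set M : ℝ := ∑ i, pnorm R (V i) with hMdef
  have hM : ∑ i, pnorm R (V i) ≤ M := le_refl _
  -- radii
  have H1 : ∀ i : σ, ∃ r > 0, ∀ t : ℝ, |t| < r →
      HasDerivAt (gfun V p (X i)) (gfun V p (lieD V (X i)) t) t :=
    fun i => gfun_hasDerivAt V p hR hp hM (X i)
  choose r1 hr1 h1 using H1
  have H2 : ∀ i : σ, ∃ r > 0, ∀ t : ℝ, |t| < r →
      eval (fun j => gfun V p (X j) t) (V i) = gfun V p (V i) t :=
    fun i => eval_eq_gfun V p hR hp hM (V i)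
  choose r2 hr2 h2 using H2
  have H3 : ∀ i : σ, ∃ r > 0, AnalyticOnNhd ℝ (gfun V p (X i)) (Metric.ball (0:ℝ) r) :=
    fun i => gfun_analytic V p hR hp hM (X i)
  choose r3 hr3 h3 using H3
  obtain ⟨r0, hr0, h0⟩ := eval_eq_gfun V p hR hp hM Q₀
  set ε : ℝ := min r0 ((Finset.univ : Finset σ).inf' Finset.univ_nonempty
    (fun i => min (r1 i) (min (r2 i) (r3 i)))) with hεdef
  have hεpos : 0 < ε := by
    rw [hεdef, lt_min_iff]
    refine ⟨hr0, ?_⟩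
    rw [Finset.lt_inf'_iff]
    intro i _
    simp only [lt_min_iff]
    exact ⟨hr1 i, hr2 i, hr3 i⟩
  have hmem : ∀ t ∈ Set.Ioo (-ε) ε, |t| < ε := fun t ht => abs_lt.mpr ⟨ht.1, ht.2⟩
  have hε1 : ∀ i, ε ≤ r1 i := fun i => le_trans (min_le_right _ _)
    (le_trans (Finset.inf'_le _ (Finset.mem_univ i)) (min_le_left _ _))
  have hε2 : ∀ i, ε ≤ r2 i := fun i => le_trans (min_le_right _ _)
    (le_trans (Finset.inf'_le _ (Finset.mem_univ i))
      (le_trans (min_le_right _ _) (min_le_left _ _)))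
  have hε3 : ∀ i, ε ≤ r3 i := fun i => le_trans (min_le_right _ _)
    (le_trans (Finset.inf'_le _ (Finset.mem_univ i))
      (le_trans (min_le_right _ _) (min_le_right _ _)))
  refine ⟨ε, hεpos, fun i => gfun V p (X i), ?_, ?_, ?_, ?_⟩
  · intro i
    refine (h3 i).mono fun t ht => ?_
    have : |t| < r3 i := lt_of_lt_of_le (hmem t ht) (hε3 i)
    simpa [Real.dist_eq] using this
  · intro i
    have := gfun_zero V p (X i)
    simpa using this
  · intro i t ht
    have hd := h1 i t (lt_of_lt_of_le (hmem t ht) (hε1 i))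
    rw [lieD_X] at hd
    rw [h2 i t (lt_of_lt_of_le (hmem t ht) (hε2 i))]
    exact hd
  · intro t ht
    exact h0 t (lt_of_lt_of_le (hmem t ht) (min_le_left _ _))

end ChunkG



end LieODE

namespace LieODE

section ChunkI

theorem tau_P0_identity {n₁ : ℕ} (K : ℝ) {ε : ℝ} (lam mu : Fin n₁ → ℝ → ℝ)
    (hl : ∀ i, ∀ t ∈ Set.Ioo (-ε) ε, HasDerivAt (lam i)
        ((((2/3) * ∑ j, lam j t) / 2 + lam i t) * mu i t) t)
    (hm : ∀ i, ∀ t ∈ Set.Ioo (-ε) ε, HasDerivAt (mu i)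
        ((mu i t) ^ 2 - ((2/3) * ∑ j, lam j t) / 2 * lam i t + K) t)
    {t : ℝ} (ht : t ∈ Set.Ioo (-ε) ε) :
    -(deriv (deriv (fun s => (2/3) * ∑ j, lam j s)) t)
      + deriv (fun s => (2/3) * ∑ j, lam j s) t * (∑ i, mu i t)
      + ((2/3) * ∑ j, lam j t) * (((2/3) * ∑ j, lam j t) ^ 2 / 4 - ((n₁:ℝ)+1) * K
          + ∑ i, (lam i t) ^ 2)
    = eval (Sum.elim (fun i => lam i t) (fun i => mu i t)) (P0 n₁ K) := by
  have hT : ∀ s ∈ Set.Ioo (-ε) ε, HasDerivAt (fun s' => (2/3) * ∑ j, lam j s')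
      ((2/3) * ∑ j, ((((2/3) * ∑ l, lam l s) / 2 + lam j s) * mu j s)) s := fun s hs =>
    (HasDerivAt.fun_sum fun j _ => hl j s hs).const_mul (2/3)
  have hEqOn : Set.EqOn (deriv (fun s => (2/3) * ∑ j, lam j s))
      (fun s => (2/3) * ∑ j, ((((2/3) * ∑ l, lam l s) / 2 + lam j s) * mu j s))
      (Set.Ioo (-ε) ε) := fun s hs => (hT s hs).deriv
  have hd1 : deriv (fun s => (2/3) * ∑ j, lam j s) t
      = (2/3) * ∑ j, ((((2/3) * ∑ l, lam l t) / 2 + lam j t) * mu j t) := (hT t ht).deriv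
  have hT1 : HasDerivAt
      (fun s => (2/3) * ∑ j, ((((2/3) * ∑ l, lam l s) / 2 + lam j s) * mu j s))
      ((2/3) * ∑ j,
        ((((2/3) * ∑ l, ((((2/3) * ∑ l', lam l' t) / 2 + lam l t) * mu l t)) / 2
            + (((2/3) * ∑ l, lam l t) / 2 + lam j t) * mu j t) * mu j t
          + (((2/3) * ∑ l, lam l t) / 2 + lam j t)
            * ((mu j t) ^ 2 - ((2/3) * ∑ l, lam l t) / 2 * lam j t + K))) t := by
    refine HasDerivAt.const_mul _ (HasDerivAt.fun_sum fun j _ => ?_)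
    exact ((((HasDerivAt.fun_sum fun l _ => hl l t ht).const_mul
      ((2:ℝ)/3)).div_const 2).add (hl j t ht)).mul (hm j t ht)
  have hd2 : deriv (deriv (fun s => (2/3) * ∑ j, lam j s)) t
      = (2/3) * ∑ j,
        ((((2/3) * ∑ l, ((((2/3) * ∑ l', lam l' t) / 2 + lam l t) * mu l t)) / 2
            + (((2/3) * ∑ l, lam l t) / 2 + lam j t) * mu j t) * mu j t
          + (((2/3) * ∑ l, lam l t) / 2 + lam j t)
            * ((mu j t) ^ 2 - ((2/3) * ∑ l, lam l t) / 2 * lam j t + K)) := by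
    have hev : deriv (fun s => (2/3) * ∑ j, lam j s)
        =ᶠ[nhds t] (fun s => (2/3) * ∑ j, ((((2/3) * ∑ l, lam l s) / 2 + lam j s) * mu j s)) :=
      Filter.eventuallyEq_of_mem (isOpen_Ioo.mem_nhds ht) hEqOn
    rw [hev.deriv_eq, hT1.deriv]
  rw [hd1, hd2]
  set A := ∑ j, lam j t with hA
  set B := ∑ j, mu j t with hB
  set C2 := ∑ j, lam j t * mu j t with hC2
  set S4 := ∑ j, (mu j t) ^ 2 with hS4
  set S5 := ∑ j, (lam j t) ^ 2 with hS5
  set S6 := ∑ j, lam j t * (mu j t) ^ 2 with hS6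
  have split1 : ∑ j, ((((2/3) * A) / 2 + lam j t) * mu j t) = ((2/3) * A) / 2 * B + C2 :=
    calc ∑ j, ((((2/3) * A) / 2 + lam j t) * mu j t)
        = ∑ j, (((2/3) * A) / 2 * mu j t + lam j t * mu j t) :=
          Finset.sum_congr rfl fun j _ => by ring
      _ = (∑ j, ((2/3) * A) / 2 * mu j t) + ∑ j, lam j t * mu j t :=
          Finset.sum_add_distrib
      _ = ((2/3) * A) / 2 * B + C2 := by
          rw [hB, hC2, Finset.mul_sum Finset.univ (fun j => mu j t) (((2/3) * A) / 2)]
  rw [split1]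
  have split2 : ∑ j,
        ((((2/3) * (((2/3) * A) / 2 * B + C2)) / 2
            + (((2/3) * A) / 2 + lam j t) * mu j t) * mu j t
          + (((2/3) * A) / 2 + lam j t)
            * ((mu j t) ^ 2 - ((2/3) * A) / 2 * lam j t + K))
      = ((2/3) * (((2/3) * A) / 2 * B + C2)) / 2 * B
          + (2/3) * A * S4 + 2 * S6
          - (((2/3) * A) / 2) ^ 2 * A - ((2/3) * A) / 2 * S5 + K * A
          + (n₁ : ℝ) * (((2/3) * A) / 2 * K) := by
    have hterm : ∀ j : Fin n₁,
        ((((2/3) * (((2/3) * A) / 2 * B + C2)) / 2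
            + (((2/3) * A) / 2 + lam j t) * mu j t) * mu j t
          + (((2/3) * A) / 2 + lam j t)
            * ((mu j t) ^ 2 - ((2/3) * A) / 2 * lam j t + K))
        = (((2/3) * (((2/3) * A) / 2 * B + C2)) / 2) * mu j t
          + ((2/3) * A) * (mu j t) ^ 2
          + 2 * (lam j t * (mu j t) ^ 2)
          - (((2/3) * A) / 2) ^ 2 * lam j t
          - ((2/3) * A) / 2 * (lam j t) ^ 2
          + K * lam j t
          + ((2/3) * A) / 2 * K := fun j => by ring
    rw [Finset.sum_congr rfl fun j _ => hterm j]
    rw [Finset.sum_add_distrib, Finset.sum_add_distrib, Finset.sum_sub_distrib,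
      Finset.sum_sub_distrib, Finset.sum_add_distrib, Finset.sum_add_distrib]
    simp only [← Finset.mul_sum]
    simp only [Finset.sum_const, Finset.card_univ, Fintype.card_fin, nsmul_eq_mul]
    rw [← hB, ← hS4, ← hS6, ← hA, ← hS5]
    ring
  rw [split2]
  simp only [P0, tauPoly, map_add, map_sub, map_mul, map_pow, eval_C, eval_X, map_sum,
    Sum.elim_inl, Sum.elim_inr]
  rw [← hA, ← hB, ← hC2, ← hS4, ← hS5, ← hS6]
  push_cast
  ring

end ChunkI

end LieODE

section Assembly

open LieODE

noncomputable def Vfield (n₁ : ℕ) (K : ℝ) :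
    (Fin n₁ ⊕ Fin n₁) → MvPolynomial (Fin n₁ ⊕ Fin n₁) ℝ :=
  Sum.elim
    (fun i => (C (1/2 : ℝ) * tauPoly n₁ + X (Sum.inl i)) * X (Sum.inr i))
    (fun i => (X (Sum.inr i)) ^ 2 - C (1/2 : ℝ) * tauPoly n₁ * X (Sum.inl i) + C K)

theorem Pseq_eq_iter (n₁ : ℕ) (K : ℝ) (k : ℕ) :
    Pseq n₁ K k = (lieD (Vfield n₁ K))^[k] (P0 n₁ K) := by
  induction k with
  | zero => rfl
  | succ k ih =>
    rw [Function.iterate_succ_apply', ← ih]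
    show Pseq n₁ K (k+1) = lieD (Vfield n₁ K) (Pseq n₁ K k)
    rw [lieD, Fintype.sum_sum_type]
    rfl

/-- The set `S` of initial values of the ODE system coincides with the
algebraic set `⋂ₖ P_k⁻¹(0)`. -/
theorem stmt_16 (n₁ : ℕ) (hn : 1 ≤ n₁) (K : ℝ) :
    {p : (Fin n₁ → ℝ) × (Fin n₁ → ℝ) |
      ∃ ε > (0 : ℝ), ∃ lam mu : Fin n₁ → ℝ → ℝ,
        (∀ i, AnalyticOnNhd ℝ (lam i) (Set.Ioo (-ε) ε)) ∧
        (∀ i, AnalyticOnNhd ℝ (mu i) (Set.Ioo (-ε) ε)) ∧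
        (∀ i, ∀ t ∈ Set.Ioo (-ε) ε,
          HasDerivAt (lam i)
            ((((2/3) * ∑ j, lam j t) / 2 + lam i t) * mu i t) t) ∧
        (∀ i, ∀ t ∈ Set.Ioo (-ε) ε,
          HasDerivAt (mu i)
            ((mu i t) ^ 2 - ((2/3) * ∑ j, lam j t) / 2 * lam i t + K) t) ∧
        (∀ t ∈ Set.Ioo (-ε) ε,
          -(deriv (deriv (fun s => (2/3) * ∑ j, lam j s)) t)
            + deriv (fun s => (2/3) * ∑ j, lam j s) t * (∑ i, mu i t)
            + ((2/3) * ∑ j, lam j t)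
              * (((2/3) * ∑ j, lam j t) ^ 2 / 4 - ((n₁ : ℝ) + 1) * K
                  + ∑ i, (lam i t) ^ 2) = 0) ∧
        (∀ i, lam i 0 = p.1 i ∧ mu i 0 = p.2 i)} =
    ⋂ k : ℕ, {p : (Fin n₁ → ℝ) × (Fin n₁ → ℝ) |
      eval (Sum.elim p.1 p.2) (Pseq n₁ K k) = 0} := by
  haveI : Nonempty (Fin n₁ ⊕ Fin n₁) := ⟨Sum.inl ⟨0, hn⟩⟩
  ext p
  simp only [Set.mem_setOf_eq, Set.mem_iInter]
  constructor
  · -- forward direction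
    rintro ⟨ε, hε, lam, mu, _, _, hl, hm, hiii, hinit⟩
    have hfun : ∀ s : ℝ, (fun v => Sum.elim lam mu v s)
        = Sum.elim (fun i => lam i s) (fun i => mu i s) := fun s => by
      funext v; cases v <;> rfl
    have key : ∀ k, ∀ t ∈ Set.Ioo (-ε) ε,
        eval (Sum.elim (fun i => lam i t) (fun i => mu i t)) (Pseq n₁ K k) = 0 := by
      intro k
      induction k with
      | zero =>
        intro t ht
        have := tau_P0_identity K lam mu hl hm ht
        rw [show Pseq n₁ K 0 = P0 n₁ K from rfl, ← this]
        exact hiii t ht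
      | succ k ih =>
        intro t ht
        set cderiv : (Fin n₁ ⊕ Fin n₁) → ℝ :=
          Sum.elim (fun i => (((2/3) * ∑ j, lam j t) / 2 + lam i t) * mu i t)
            (fun i => (mu i t) ^ 2 - ((2/3) * ∑ j, lam j t) / 2 * lam i t + K) with hcd
        have hc : ∀ v, HasDerivAt (fun s => Sum.elim lam mu v s) (cderiv v) t := by
          intro v
          cases v with
          | inl i => exact hl i t ht
          | inr i => exact hm i t ht
        have hD := hasDerivAt_eval hc (Pseq n₁ K k)
        simp only [hfun] at hD
        have hev : (fun s => eval (Sum.elim (fun i => lam i s) (fun i => mu i s))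
            (Pseq n₁ K k)) =ᶠ[nhds t] (fun _ => (0:ℝ)) := by
          filter_upwards [isOpen_Ioo.mem_nhds ht] with s hs
          exact ih s hs
        have hzero : HasDerivAt (fun s => eval (Sum.elim (fun i => lam i s)
            (fun i => mu i s)) (Pseq n₁ K k)) 0 t :=
          (hasDerivAt_const t (0:ℝ)).congr_of_eventuallyEq hev
        have hsum0 : ∑ v, eval (Sum.elim (fun i => lam i t) (fun i => mu i t))
            (pderiv v (Pseq n₁ K k)) * cderiv v = 0 := hD.unique hzero
        have hPs : eval (Sum.elim (fun i => lam i t) (fun i => mu i t)) (Pseq n₁ K (k+1))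
            = ∑ v, eval (Sum.elim (fun i => lam i t) (fun i => mu i t))
                (pderiv v (Pseq n₁ K k)) * cderiv v := by
          show eval _ ((∑ i : Fin n₁, pderiv (Sum.inl i) (Pseq n₁ K k)
              * ((C (1/2 : ℝ) * tauPoly n₁ + X (Sum.inl i)) * X (Sum.inr i)))
            + ∑ i : Fin n₁, pderiv (Sum.inr i) (Pseq n₁ K k)
              * ((X (Sum.inr i)) ^ 2 - C (1/2 : ℝ) * tauPoly n₁ * X (Sum.inl i) + C K)) = _
          rw [Fintype.sum_sum_type, map_add, map_sum, map_sum]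
          congr 1
          · refine Finset.sum_congr rfl fun i _ => ?_
            simp only [map_mul, map_add, map_sub, map_pow, eval_C, eval_X, tauPoly,
              map_sum, Sum.elim_inl, Sum.elim_inr, hcd]
            ring
          · refine Finset.sum_congr rfl fun i _ => ?_
            simp only [map_mul, map_add, map_sub, map_pow, eval_C, eval_X, tauPoly,
              map_sum, Sum.elim_inl, Sum.elim_inr, hcd]
            ring
        rw [hPs]
        exact hsum0
    intro k
    have h0 : (0:ℝ) ∈ Set.Ioo (-ε) ε := by constructor <;> simp [hε] <;> linarith
    have := key k 0 h0
    have hst : (Sum.elim (fun i => lam i 0) (fun i => mu i 0) : (Fin n₁ ⊕ Fin n₁) → ℝ)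
        = Sum.elim p.1 p.2 := by
      funext v
      cases v with
      | inl i => exact (hinit i).1
      | inr i => exact (hinit i).2
    rwa [hst] at this
  · -- reverse direction
    intro hPk
    obtain ⟨ε, hε, x, hxan, hx0, hxode, hxQ⟩ :=
      exists_solution (Vfield n₁ K) (Sum.elim p.1 p.2) (P0 n₁ K)
    have hgzero : ∀ t : ℝ, gfun (Vfield n₁ K) (Sum.elim p.1 p.2) (P0 n₁ K) t = 0 := by
      intro t
      have hac : ∀ k, acoef (Vfield n₁ K) (Sum.elim p.1 p.2) (P0 n₁ K) k = 0 := by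
        intro k
        rw [acoef, ← Pseq_eq_iter, hPk k, zero_div]
      simp [gfun, hac]
    refine ⟨ε, hε, fun i => x (Sum.inl i), fun i => x (Sum.inr i), ?_, ?_, ?_, ?_, ?_, ?_⟩
    · exact fun i => hxan (Sum.inl i)
    · exact fun i => hxan (Sum.inr i)
    · intro i t ht
      have := hxode (Sum.inl i) t ht
      convert this using 1
      simp only [Vfield, Sum.elim_inl, map_mul, map_add, eval_C, eval_X, tauPoly,
        map_sum]
      ring
    · intro i t ht
      have := hxode (Sum.inr i) t ht
      convert this using 1
      simp only [Vfield, Sum.elim_inr, map_mul, map_add, map_sub, map_pow, eval_C,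
        eval_X, tauPoly, map_sum]
      ring
    · intro t ht
      have hl' : ∀ i, ∀ t ∈ Set.Ioo (-ε) ε,
          HasDerivAt (fun s => x (Sum.inl i) s)
            ((((2/3) * ∑ j, x (Sum.inl j) t) / 2 + x (Sum.inl i) t) * x (Sum.inr i) t) t := by
        intro i t ht
        have := hxode (Sum.inl i) t ht
        convert this using 1
        simp only [Vfield, Sum.elim_inl, map_mul, map_add, eval_C, eval_X, tauPoly,
          map_sum]
        ring
      have hm' : ∀ i, ∀ t ∈ Set.Ioo (-ε) ε,
          HasDerivAt (fun s => x (Sum.inr i) s)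
            ((x (Sum.inr i) t) ^ 2 - ((2/3) * ∑ j, x (Sum.inl j) t) / 2 * x (Sum.inl i) t + K) t := by
        intro i t ht
        have := hxode (Sum.inr i) t ht
        convert this using 1
        simp only [Vfield, Sum.elim_inr, map_mul, map_add, map_sub, map_pow, eval_C,
          eval_X, tauPoly, map_sum]
        ring
      have hid := tau_P0_identity K (fun i => x (Sum.inl i)) (fun i => x (Sum.inr i))
        hl' hm' ht
      rw [hid]
      have hfun2 : (Sum.elim (fun i => x (Sum.inl i) t) (fun i => x (Sum.inr i) t)
          : (Fin n₁ ⊕ Fin n₁) → ℝ) = fun j => x j t := by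
        funext v; cases v <;> rfl
      rw [hfun2, hxQ t ht, hgzero t]
    · intro i
      exact ⟨hx0 (Sum.inl i), hx0 (Sum.inr i)⟩
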